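/- arXiv:2001.03441 — 14 statements merged into one kernel-verified Lean document; each statement's English description precedes it below -/
import Mathlib

section
/- The closed unit interval [0,1] together with the ternary operation p(a,b,c) = (1-b)a + bc = a + bc - ba and the constants 0, 1/2, 1 is a mobi algebra; in particular p(a,b,c) ∈ [0,1] whenever a,b,c ∈ [0,1], and all eight mobi algebra axioms hold. -/
/-- A mobi algebra: a set `A` with a ternary operation `p` and constants `e0`, `eh`, `e1`
satisfying axioms (A1)–(A8). -/
structure MobiAlgebra (A : Type*) where
  p : A → A → A → A
  e0 : A
  eh : A
  e1 : A
  ax1 : p e1 eh e0 = eh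
  ax2 : ∀ a, p e0 a e1 = a
  ax3 : ∀ a b, p a b a = a
  ax4 : ∀ a b, p a e0 b = a
  ax5 : ∀ a b, p a e1 b = b
  ax6 : ∀ a b₁ b₂, p a eh b₁ = p a eh b₂ → b₁ = b₂
  ax7 : ∀ a b c₁ c₂ c₃, p a (p c₁ c₂ c₃) b = p (p a c₁ b) c₂ (p a c₃ b)
  ax8 : ∀ a₁ a₂ b₁ b₂ c, p (p a₁ c b₁) eh (p a₂ c b₂) = p (p a₁ eh a₂) c (p b₁ eh b₂)

/-- An `A`-mobi space over a mobi algebra `M` on `A`: a set `X` with `q : X × A × X → X`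
satisfying axioms (X1)–(X5). -/
structure MobiSpace {A : Type*} (M : MobiAlgebra A) (X : Type*) where
  q : X → A → X → X
  sx1 : ∀ x y, q x M.e0 y = x
  sx2 : ∀ x y, q x M.e1 y = y
  sx3 : ∀ x a, q x a x = x
  sx4 : ∀ x y₁ y₂, q x M.eh y₁ = q x M.eh y₂ → y₁ = y₂
  sx5 : ∀ x y a b c, q (q x a y) b (q x c y) = q x (M.p a b c) y

/-- The closed unit interval `[0,1]` with `p(a,b,c) = (1-b)a + bc` and constants
`0`, `1/2`, `1` is a mobi algebra; in particular `p(a,b,c) ∈ [0,1]` whenever `a,b,c ∈ [0,1]`. -/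
theorem unitInterval_isMobiAlgebra :
    (∀ a b c : ℝ, a ∈ Set.Icc (0:ℝ) 1 → b ∈ Set.Icc (0:ℝ) 1 → c ∈ Set.Icc (0:ℝ) 1 →
      (1 - b) * a + b * c ∈ Set.Icc (0:ℝ) 1) ∧
    ∃ M : MobiAlgebra (Set.Icc (0:ℝ) 1),
      (∀ a b c : Set.Icc (0:ℝ) 1, (M.p a b c : ℝ) = (1 - (b:ℝ)) * (a:ℝ) + (b:ℝ) * (c:ℝ)) ∧
      (M.e0 : ℝ) = 0 ∧ (M.eh : ℝ) = 1/2 ∧ (M.e1 : ℝ) = 1 := by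
  have hmem : ∀ a b c : ℝ, a ∈ Set.Icc (0:ℝ) 1 → b ∈ Set.Icc (0:ℝ) 1 → c ∈ Set.Icc (0:ℝ) 1 →
      (1 - b) * a + b * c ∈ Set.Icc (0:ℝ) 1 := by
    rintro a b c ⟨ha0, ha1⟩ ⟨hb0, hb1⟩ ⟨hc0, hc1⟩
    constructor
    · nlinarith
    · nlinarith
  refine ⟨hmem, ⟨⟨fun a b c => ⟨(1 - (b:ℝ)) * a + b * c, hmem a b c a.2 b.2 c.2⟩,
      ⟨0, by norm_num⟩, ⟨1/2, by norm_num⟩, ⟨1, by norm_num⟩,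
      ?_, ?_, ?_, ?_, ?_, ?_, ?_, ?_⟩, fun a b c => rfl, rfl, rfl, rfl⟩⟩
  · apply Subtype.ext; norm_num
  · intro a; apply Subtype.ext; simp
  · intro a b; apply Subtype.ext; simp; ring
  · intro a b; apply Subtype.ext; simp
  · intro a b; apply Subtype.ext; simp
  · intro a b₁ b₂ h
    have := congrArg (Subtype.val) h
    simp at this
    apply Subtype.ext; linarith
  · intro a b c₁ c₂ c₃; apply Subtype.ext; simp; ring
  · intro a₁ a₂ b₁ b₂ c; apply Subtype.ext; simp; ring
end

section
/- Let (X,⊕) be a non-empty midpoint algebra and e ∈ X a fixed element. Then the system (End_e^⊕(X), 𝕡, 𝟘, 𝟙/𝟚, 𝟙), where for f,g,h ∈ End_e^⊕(X) the map 𝕡_{f,g,h} is defined by 𝕡_{f,g,h}(x) = g̃(f(x),h(x)), and 𝟘(x) = e, (𝟙/𝟚)(x) = e ⊕ x, 𝟙(x) = x, is a mobi algebra; in particular 𝕡_{f,g,h} again belongs to End_e^⊕(X). -/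
/-- `g : X → X` belongs to `End_e^⊕(X)`: it preserves midpoints, fixes `e`, and the elements
`ḡ(x)` (condition (iii)) and `g̃(x,y)` (condition (iv)) exist. -/
def IsMobiEnd {X : Type*} (op : X → X → X) (e : X) (g : X → X) : Prop :=
  (∀ x y, g (op x y) = op (g x) (g y)) ∧
  (g e = e) ∧
  (∀ x, ∃ w, op w (g x) = op e x) ∧
  (∀ x y, ∃ z w, op w (g x) = op e x ∧ op w (g y) = op e z)

section MobiEndAux

variable {X : Type*} {op : X → X → X} {e : X}

/-- The unique `ḡ(x)` with `ḡ(x) ⊕ g(x) = e ⊕ x`. -/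
noncomputable def mbar (g : {g : X → X // IsMobiEnd op e g}) (x : X) : X :=
  (g.2.2.2.1 x).choose

theorem mbar_spec (g : {g : X → X // IsMobiEnd op e g}) (x : X) :
    op (mbar g x) (g.1 x) = op e x := (g.2.2.2.1 x).choose_spec

/-- The unique `g̃(a,b)` with `ḡ(a) ⊕ g(b) = e ⊕ g̃(a,b)`. -/
noncomputable def mtilde (g : {g : X → X // IsMobiEnd op e g}) (a b : X) : X :=
  (g.2.2.2.2 a b).choose

theorem mtilde_spec (hcancel : ∀ x x' y, op x y = op x' y → x = x')
    (g : {g : X → X // IsMobiEnd op e g}) (a b : X) :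
    op (mbar g a) (g.1 b) = op e (mtilde g a b) := by
  obtain ⟨w, hw1, hw2⟩ := (g.2.2.2.2 a b).choose_spec
  have hw : w = mbar g a := hcancel _ _ _ (hw1.trans (mbar_spec g a).symm)
  rw [← hw]; exact hw2

theorem cancelL (hcomm : ∀ x y, op x y = op y x)
    (hcancel : ∀ x x' y, op x y = op x' y → x = x')
    {a b : X} (h : op e a = op e b) : a = b := by
  refine hcancel a b e ?_
  rw [hcomm a e, hcomm b e]; exact h

theorem op_e_e (hidem : ∀ x, op x x = x)
    (hmedial : ∀ x y z w, op (op x y) (op z w) = op (op x z) (op y w))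
    (a b : X) : op (op e a) (op e b) = op e (op a b) := by
  rw [hmedial e a e b, hidem e]

theorem mbar_hom (hcancel : ∀ x x' y, op x y = op x' y → x = x')
    (hmedial : ∀ x y z w, op (op x y) (op z w) = op (op x z) (op y w))
    (hidem : ∀ x, op x x = x)
    (g : {g : X → X // IsMobiEnd op e g}) (x y : X) :
    mbar g (op x y) = op (mbar g x) (mbar g y) := by
  refine hcancel _ _ (g.1 (op x y)) ?_
  rw [mbar_spec g (op x y), g.2.1 x y, hmedial (mbar g x) (mbar g y) (g.1 x) (g.1 y),
    mbar_spec g x, mbar_spec g y, op_e_e hidem hmedial]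

theorem mbar_e (hcancel : ∀ x x' y, op x y = op x' y → x = x')
    (g : {g : X → X // IsMobiEnd op e g}) : mbar g e = e := by
  refine hcancel _ _ e ?_
  have := mbar_spec g e
  rw [g.2.2.1] at this
  rw [this]

theorem mtilde_diag (hcomm : ∀ x y, op x y = op y x)
    (hcancel : ∀ x x' y, op x y = op x' y → x = x')
    (g : {g : X → X // IsMobiEnd op e g}) (a : X) : mtilde g a a = a := by
  refine (cancelL (e := e) hcomm hcancel ?_).symm
  rw [← mtilde_spec hcancel g a a, mbar_spec g a]

theorem mtilde_e_left (hcomm : ∀ x y, op x y = op y x)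
    (hcancel : ∀ x x' y, op x y = op x' y → x = x')
    (g : {g : X → X // IsMobiEnd op e g}) (b : X) : mtilde g e b = g.1 b := by
  refine (cancelL (e := e) hcomm hcancel ?_).symm
  rw [← mtilde_spec hcancel g e b, mbar_e hcancel g]

theorem mtilde_e_right (hcomm : ∀ x y, op x y = op y x)
    (hcancel : ∀ x x' y, op x y = op x' y → x = x')
    (g : {g : X → X // IsMobiEnd op e g}) (a : X) : mtilde g a e = mbar g a := by
  refine (cancelL (e := e) hcomm hcancel ?_).symm
  rw [← mtilde_spec hcancel g a e, g.2.2.1, hcomm (mbar g a) e]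

theorem mtilde_hom (hcomm : ∀ x y, op x y = op y x)
    (hcancel : ∀ x x' y, op x y = op x' y → x = x')
    (hmedial : ∀ x y z w, op (op x y) (op z w) = op (op x z) (op y w))
    (hidem : ∀ x, op x x = x)
    (g : {g : X → X // IsMobiEnd op e g}) (a a' b b' : X) :
    mtilde g (op a a') (op b b') = op (mtilde g a b) (mtilde g a' b') := by
  refine cancelL (e := e) hcomm hcancel ?_
  rw [← mtilde_spec hcancel g (op a a') (op b b'),
    mbar_hom hcancel hmedial hidem g a a', g.2.1 b b',
    hmedial (mbar g a) (mbar g a') (g.1 b) (g.1 b'),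
    mtilde_spec hcancel g a b, mtilde_spec hcancel g a' b', op_e_e hidem hmedial]

theorem mtilde_shift (hcomm : ∀ x y, op x y = op y x)
    (hcancel : ∀ x x' y, op x y = op x' y → x = x')
    (hmedial : ∀ x y z w, op (op x y) (op z w) = op (op x z) (op y w))
    (hidem : ∀ x, op x x = x)
    (g : {g : X → X // IsMobiEnd op e g}) (a b : X) :
    mtilde g (op e a) (op e b) = op e (mtilde g a b) := by
  rw [mtilde_hom hcomm hcancel hmedial hidem g e a e b, mtilde_diag hcomm hcancel g e]

/-- The operation `𝕡_{f,g,h}(x) = g̃(f(x),h(x))` belongs to `End_e^⊕(X)`. -/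
noncomputable def pmap (hcomm : ∀ x y, op x y = op y x)
    (hcancel : ∀ x x' y, op x y = op x' y → x = x')
    (hmedial : ∀ x y z w, op (op x y) (op z w) = op (op x z) (op y w))
    (hidem : ∀ x, op x x = x)
    (f g h : {g : X → X // IsMobiEnd op e g}) : {g : X → X // IsMobiEnd op e g} :=
  ⟨fun x => mtilde g (f.1 x) (h.1 x), by
    refine ⟨?_, ?_, ?_, ?_⟩
    · intro x y
      show mtilde g (f.1 (op x y)) (h.1 (op x y))
        = op (mtilde g (f.1 x) (h.1 x)) (mtilde g (f.1 y) (h.1 y))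
      rw [f.2.1 x y, h.2.1 x y, mtilde_hom hcomm hcancel hmedial hidem]
    · show mtilde g (f.1 e) (h.1 e) = e
      rw [f.2.2.1, h.2.2.1, mtilde_diag hcomm hcancel g e]
    · intro x
      refine ⟨mtilde g (mbar f x) (mbar h x), ?_⟩
      show op (mtilde g (mbar f x) (mbar h x)) (mtilde g (f.1 x) (h.1 x)) = op e x
      rw [← mtilde_hom hcomm hcancel hmedial hidem g _ (f.1 x) _ (h.1 x),
        mbar_spec f x, mbar_spec h x, mtilde_diag hcomm hcancel g (op e x)]
    · intro x y
      refine ⟨mtilde g (mtilde f x y) (mtilde h x y), mtilde g (mbar f x) (mbar h x), ?_, ?_⟩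
      · show op (mtilde g (mbar f x) (mbar h x)) (mtilde g (f.1 x) (h.1 x)) = op e x
        rw [← mtilde_hom hcomm hcancel hmedial hidem g _ (f.1 x) _ (h.1 x),
          mbar_spec f x, mbar_spec h x, mtilde_diag hcomm hcancel g (op e x)]
      · show op (mtilde g (mbar f x) (mbar h x)) (mtilde g (f.1 y) (h.1 y))
          = op e (mtilde g (mtilde f x y) (mtilde h x y))
        rw [← mtilde_hom hcomm hcancel hmedial hidem g _ (f.1 y) _ (h.1 y),
          mtilde_spec hcancel f x y, mtilde_spec hcancel h x y,
          mtilde_shift hcomm hcancel hmedial hidem]⟩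

theorem mbar_pmap (hcomm : ∀ x y, op x y = op y x)
    (hcancel : ∀ x x' y, op x y = op x' y → x = x')
    (hmedial : ∀ x y z w, op (op x y) (op z w) = op (op x z) (op y w))
    (hidem : ∀ x, op x x = x)
    (f g h : {g : X → X // IsMobiEnd op e g}) (x : X) :
    mbar (pmap hcomm hcancel hmedial hidem f g h) x = mtilde g (mbar f x) (mbar h x) := by
  refine hcancel _ _ ((pmap hcomm hcancel hmedial hidem f g h).1 x) ?_
  rw [mbar_spec (pmap hcomm hcancel hmedial hidem f g h) x]
  show op e x = op (mtilde g (mbar f x) (mbar h x)) (mtilde g (f.1 x) (h.1 x))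
  rw [← mtilde_hom hcomm hcancel hmedial hidem g _ (f.1 x) _ (h.1 x),
    mbar_spec f x, mbar_spec h x, mtilde_diag hcomm hcancel g (op e x)]

theorem mtilde_pmap (hcomm : ∀ x y, op x y = op y x)
    (hcancel : ∀ x x' y, op x y = op x' y → x = x')
    (hmedial : ∀ x y z w, op (op x y) (op z w) = op (op x z) (op y w))
    (hidem : ∀ x, op x x = x)
    (f g h : {g : X → X // IsMobiEnd op e g}) (x y : X) :
    mtilde (pmap hcomm hcancel hmedial hidem f g h) x y
      = mtilde g (mtilde f x y) (mtilde h x y) := by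
  refine cancelL (e := e) hcomm hcancel ?_
  rw [← mtilde_spec hcancel (pmap hcomm hcancel hmedial hidem f g h) x y,
    mbar_pmap hcomm hcancel hmedial hidem f g h x]
  show op (mtilde g (mbar f x) (mbar h x)) (mtilde g (f.1 y) (h.1 y)) = _
  rw [← mtilde_hom hcomm hcancel hmedial hidem g _ (f.1 y) _ (h.1 y),
    mtilde_spec hcancel f x y, mtilde_spec hcancel h x y,
    mtilde_shift hcomm hcancel hmedial hidem]

/-- The constant map `𝟘(x) = e`. -/
def czero (hcomm : ∀ x y, op x y = op y x) (hidem : ∀ x, op x x = x) :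
    {g : X → X // IsMobiEnd op e g} :=
  ⟨fun _ => e, fun x y => (hidem e).symm, rfl,
    fun x => ⟨x, hcomm x e⟩, fun x y => ⟨x, x, hcomm x e, hcomm x e⟩⟩

/-- The identity map `𝟙(x) = x`. -/
def cone : {g : X → X // IsMobiEnd op e g} :=
  ⟨fun x => x, fun _ _ => rfl, rfl, fun x => ⟨e, rfl⟩, fun x y => ⟨y, e, rfl, rfl⟩⟩

/-- The map `(𝟙/𝟚)(x) = e ⊕ x`. -/
def chalf (hcomm : ∀ x y, op x y = op y x) (hidem : ∀ x, op x x = x)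
    (hmedial : ∀ x y z w, op (op x y) (op z w) = op (op x z) (op y w)) :
    {g : X → X // IsMobiEnd op e g} :=
  ⟨fun x => op e x, fun x y => (op_e_e hidem hmedial x y).symm, hidem e,
    fun x => ⟨op e x, hidem (op e x)⟩,
    fun x y => ⟨op x y, op e x, hidem (op e x), op_e_e hidem hmedial x y⟩⟩

theorem mbar_czero (hcomm : ∀ x y, op x y = op y x)
    (hcancel : ∀ x x' y, op x y = op x' y → x = x')
    (hidem : ∀ x, op x x = x) (x : X) :
    mbar (czero hcomm hidem (op := op) (e := e)) x = x := by
  refine hcancel _ _ e ?_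
  exact (mbar_spec (czero hcomm hidem (op := op) (e := e)) x).trans (hcomm e x)

theorem mtilde_czero (hcomm : ∀ x y, op x y = op y x)
    (hcancel : ∀ x x' y, op x y = op x' y → x = x')
    (hidem : ∀ x, op x x = x) (x y : X) :
    mtilde (czero hcomm hidem (op := op) (e := e)) x y = x := by
  refine (cancelL (e := e) hcomm hcancel ?_).symm
  rw [← mtilde_spec hcancel (czero hcomm hidem) x y, mbar_czero hcomm hcancel hidem x]
  exact hcomm e x

theorem mbar_cone (hcancel : ∀ x x' y, op x y = op x' y → x = x') (x : X) :
    mbar (cone (op := op) (e := e)) x = e := by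
  refine hcancel _ _ x ?_
  exact mbar_spec (cone (op := op) (e := e)) x

theorem mtilde_cone (hcomm : ∀ x y, op x y = op y x)
    (hcancel : ∀ x x' y, op x y = op x' y → x = x') (x y : X) :
    mtilde (cone (op := op) (e := e)) x y = y := by
  refine (cancelL (e := e) hcomm hcancel ?_).symm
  rw [← mtilde_spec hcancel cone x y, mbar_cone hcancel x]
  rfl

theorem mbar_chalf (hcomm : ∀ x y, op x y = op y x)
    (hcancel : ∀ x x' y, op x y = op x' y → x = x')
    (hidem : ∀ x, op x x = x)
    (hmedial : ∀ x y z w, op (op x y) (op z w) = op (op x z) (op y w)) (x : X) :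
    mbar (chalf hcomm hidem hmedial (op := op) (e := e)) x = op e x := by
  refine hcancel _ _ (op e x) ?_
  rw [hidem (op e x)]
  exact mbar_spec (chalf hcomm hidem hmedial (op := op) (e := e)) x

theorem mtilde_chalf (hcomm : ∀ x y, op x y = op y x)
    (hcancel : ∀ x x' y, op x y = op x' y → x = x')
    (hidem : ∀ x, op x x = x)
    (hmedial : ∀ x y z w, op (op x y) (op z w) = op (op x z) (op y w)) (x y : X) :
    mtilde (chalf hcomm hidem hmedial (op := op) (e := e)) x y = op x y := by
  refine (cancelL (e := e) hcomm hcancel ?_).symm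
  rw [← mtilde_spec hcancel (chalf hcomm hidem hmedial) x y,
    mbar_chalf hcomm hcancel hidem hmedial x]
  exact (op_e_e hidem hmedial x y).symm

end MobiEndAux

/-- For a non-empty midpoint algebra `(X,⊕)` with a fixed element `e ∈ X`, the set
`End_e^⊕(X)` carries a mobi algebra structure with `𝕡_{f,g,h}(x) = g̃(f(x), h(x))`,
`𝟘(x) = e`, `(𝟙/𝟚)(x) = e ⊕ x` and `𝟙(x) = x`.  Here `𝕡_{f,g,h}(x)` is characterised by
`ḡ(f(x)) ⊕ g(h(x)) = e ⊕ 𝕡_{f,g,h}(x)`, where `w = ḡ(f(x))` is the (unique) element with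
`w ⊕ g(f(x)) = e ⊕ f(x)`. -/
theorem endMidpoint_isMobiAlgebra {X : Type*} (op : X → X → X) (e : X)
    (hidem : ∀ x, op x x = x)
    (hcomm : ∀ x y, op x y = op y x)
    (hcancel : ∀ x x' y, op x y = op x' y → x = x')
    (hmedial : ∀ x y z w, op (op x y) (op z w) = op (op x z) (op y w)) :
    ∃ M : MobiAlgebra {g : X → X // IsMobiEnd op e g},
      (∀ f g h : {g : X → X // IsMobiEnd op e g}, ∀ x : X,
        ∃ w, op w (g.1 (f.1 x)) = op e (f.1 x) ∧
             op w (g.1 (h.1 x)) = op e ((M.p f g h).1 x)) ∧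
      (∀ x, (M.e0).1 x = e) ∧
      (∀ x, (M.eh).1 x = op e x) ∧
      (∀ x, (M.e1).1 x = x) := by
  classical
  refine ⟨{ p := pmap hcomm hcancel hmedial hidem,
            e0 := czero hcomm hidem,
            eh := chalf hcomm hidem hmedial,
            e1 := cone,
            ax1 := ?_, ax2 := ?_, ax3 := ?_, ax4 := ?_,
            ax5 := ?_, ax6 := ?_, ax7 := ?_, ax8 := ?_ },
          ?_, fun _ => rfl, fun _ => rfl, fun _ => rfl⟩
  · refine Subtype.ext (funext fun x => ?_)
    show mtilde (chalf hcomm hidem hmedial) x e = op e x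
    rw [mtilde_chalf hcomm hcancel hidem hmedial, hcomm x e]
  · intro a
    refine Subtype.ext (funext fun x => ?_)
    show mtilde a e x = a.1 x
    exact mtilde_e_left hcomm hcancel a x
  · intro a b
    refine Subtype.ext (funext fun x => ?_)
    exact mtilde_diag hcomm hcancel b (a.1 x)
  · intro a b
    refine Subtype.ext (funext fun x => ?_)
    exact mtilde_czero hcomm hcancel hidem (a.1 x) (b.1 x)
  · intro a b
    refine Subtype.ext (funext fun x => ?_)
    exact mtilde_cone hcomm hcancel (a.1 x) (b.1 x)
  · intro a b₁ b₂ hEq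
    refine Subtype.ext (funext fun x => ?_)
    have h1 : mtilde (chalf hcomm hidem hmedial) (a.1 x) (b₁.1 x)
        = mtilde (chalf hcomm hidem hmedial) (a.1 x) (b₂.1 x) :=
      congrFun (congrArg Subtype.val hEq) x
    rw [mtilde_chalf hcomm hcancel hidem hmedial,
      mtilde_chalf hcomm hcancel hidem hmedial] at h1
    refine hcancel _ _ (a.1 x) ?_
    rw [hcomm (b₁.1 x) (a.1 x), hcomm (b₂.1 x) (a.1 x)]
    exact h1
  · intro a b c₁ c₂ c₃
    refine Subtype.ext (funext fun x => ?_)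
    exact mtilde_pmap hcomm hcancel hmedial hidem c₁ c₂ c₃ (a.1 x) (b.1 x)
  · intro a₁ a₂ b₁ b₂ c
    refine Subtype.ext (funext fun x => ?_)
    show mtilde (chalf hcomm hidem hmedial)
        (mtilde c (a₁.1 x) (b₁.1 x)) (mtilde c (a₂.1 x) (b₂.1 x))
      = mtilde c (mtilde (chalf hcomm hidem hmedial) (a₁.1 x) (a₂.1 x))
          (mtilde (chalf hcomm hidem hmedial) (b₁.1 x) (b₂.1 x))
    rw [mtilde_chalf hcomm hcancel hidem hmedial,
      mtilde_chalf hcomm hcancel hidem hmedial,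
      mtilde_chalf hcomm hcancel hidem hmedial,
      mtilde_hom hcomm hcancel hmedial hidem]
  · intro f g h x
    exact ⟨mbar g (f.1 x), mbar_spec g (f.1 x), mtilde_spec hcancel g (f.1 x) (h.1 x)⟩
end

section
/- Let (X,+,0) be an abelian group in which the endomorphism x ↦ x + x is bijective, with inverse written x ↦ x/2. Then the system (End(X), 𝕡, 𝟘, 𝟙/𝟚, 𝟙), where End(X) is the set of group endomorphisms of X, 𝕡_{f,g,h}(x) = f(x) - g(f(x)) + g(h(x)), 𝟘(x) = 0, (𝟙/𝟚)(x) = x/2, and 𝟙(x) = x, is a mobi algebra. -/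
/-- If `(X,+,0)` is an abelian group in which `x ↦ x + x` is bijective (with inverse
`x ↦ x/2`), then the set `End(X)` of group endomorphisms of `X` is a mobi algebra with
`𝕡_{f,g,h}(x) = f(x) - g(f(x)) + g(h(x))`, `𝟘(x) = 0`, `(𝟙/𝟚)(x) = x/2` and `𝟙(x) = x`. -/
theorem endAddGroup_isMobiAlgebra {X : Type*} [AddCommGroup X]
    (hdouble : Function.Bijective fun x : X => x + x) :
    ∃ M : MobiAlgebra (AddMonoid.End X),
      (∀ f g h : AddMonoid.End X, ∀ x : X, M.p f g h x = f x - g (f x) + g (h x)) ∧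
      (∀ x : X, M.e0 x = 0) ∧
      (∀ x : X, M.eh x + M.eh x = x) ∧
      (∀ x : X, M.e1 x = x) := by
  classical
  set e := Equiv.ofBijective _ hdouble with he
  have hes : ∀ x : X, e.symm x + e.symm x = x := fun x => e.apply_symm_apply x
  have hadd : ∀ x y : X, e.symm (x + y) = e.symm x + e.symm y := by
    intro x y
    apply hdouble.injective
    show (e.symm (x+y)) + (e.symm (x+y)) = (e.symm x + e.symm y) + (e.symm x + e.symm y)
    rw [hes]
    have := hes x; have := hes y
    calc x + y = (e.symm x + e.symm x) + (e.symm y + e.symm y) := by rw [hes, hes]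
      _ = (e.symm x + e.symm y) + (e.symm x + e.symm y) := by abel
  let H : AddMonoid.End X := AddMonoidHom.mk' (fun x => e.symm x) hadd
  have hH : ∀ x, H x + H x = x := hes
  have hHinj : Function.Injective H := e.symm.injective
  have hcentral : ∀ f : AddMonoid.End X, H * f = f * H := by
    intro f
    refine AddMonoidHom.ext fun x => ?_
    show H (f x) = f (H x)
    apply hdouble.injective
    show H (f x) + H (f x) = f (H x) + f (H x)
    rw [hH, ← map_add, hH]
  refine ⟨⟨fun f g h => f - g * f + g * h, 0, H, 1, ?_, ?_, ?_, ?_, ?_, ?_, ?_, ?_⟩,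
    ?_, ?_, ?_, ?_⟩
  · -- ax1: 1 - H*1 + H*0 = H
    have h1 : H + H = 1 := AddMonoidHom.ext fun x => hH x
    show (1 : AddMonoid.End X) - H * 1 + H * 0 = H
    rw [mul_one, mul_zero, add_zero, ← h1]; abel
  · intro a; simp
  · intro a b; noncomm_ring
  · intro a b; simp
  · intro a b; simp
  · intro a b₁ b₂ hab
    have : H * b₁ = H * b₂ := by
      have := hab
      have h2 : a - H * a + H * b₁ = a - H * a + H * b₂ := hab
      abel_nf at h2
      linear_combination (norm := abel) h2
    exact AddMonoidHom.ext fun x => hHinj (congrArg (fun φ : AddMonoid.End X => φ x) this)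
  · intro a b c₁ c₂ c₃; noncomm_ring
  · intro a₁ a₂ b₁ b₂ c
    have hc := hcentral c
    have hcomm : ∀ f : AddMonoid.End X, H * (c * f) = c * (H * f) := fun f => by
      rw [← mul_assoc, hc, mul_assoc]
    noncomm_ring
    simp only [hcomm]
    abel
  · intro f g h x; rfl
  · intro x; rfl
  · intro x; exact hH x
  · intro x; rfl
end

section
/- Let (A,p,0,½,1) be a mobi algebra and (X,q) an A-mobi space. Then for all x,y ∈ X and a ∈ A, q(q(x,a,y),½,q(y,a,x)) = q(x,½,y). -/
/-- In an `A`-mobi space, `q(q(x,a,y),½,q(y,a,x)) = q(x,½,y)`. -/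
theorem mobiSpace_midSym {A X : Type*} (M : MobiAlgebra A) (S : MobiSpace M X) :
    ∀ x y : X, ∀ a : A, S.q (S.q x a y) M.eh (S.q y a x) = S.q x M.eh y := by
  intro x y a
  have key : M.p a M.eh (M.p M.e1 a M.e0) = M.eh := by
    calc M.p a M.eh (M.p M.e1 a M.e0)
        = M.p (M.p M.e0 a M.e1) M.eh (M.p M.e1 a M.e0) := by rw [M.ax2]
      _ = M.p (M.p M.e0 M.eh M.e1) a (M.p M.e1 M.eh M.e0) := M.ax8 _ _ _ _ _
      _ = M.p M.eh a M.eh := by rw [M.ax2, M.ax1]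
      _ = M.eh := M.ax3 _ _
  have h1 : S.q y a x = S.q x (M.p M.e1 a M.e0) y := by
    rw [← S.sx5, S.sx2, S.sx1]
  rw [h1, S.sx5, key]
end

section
/- Let (A,p,0,½,1) be a mobi algebra and (X,q) an A-mobi space. Then for all x,y ∈ X and a ∈ A, q(x,½,q(x,a,y)) = q(x,a,q(x,½,y)). -/
lemma mobi_key {A : Type*} (M : MobiAlgebra A) (a : A) :
    M.p M.e0 M.eh a = M.p M.e0 a M.eh := by
  have h : M.p (M.p M.e0 a M.e0) M.eh (M.p M.e0 a M.e1)
      = M.p (M.p M.e0 M.eh M.e0) a (M.p M.e0 M.eh M.e1) := M.ax8 _ _ _ _ _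
  rwa [M.ax3, M.ax2, M.ax3, M.ax2] at h

/-- In an `A`-mobi space, `q(x,½,q(x,a,y)) = q(x,a,q(x,½,y))`. -/
theorem mobiSpace_halfComm {A X : Type*} (M : MobiAlgebra A) (S : MobiSpace M X) :
    ∀ x y : X, ∀ a : A, S.q x M.eh (S.q x a y) = S.q x a (S.q x M.eh y) := by
  intro x y a
  have h1 : S.q x M.eh (S.q x a y) = S.q x (M.p M.e0 M.eh a) y := by
    rw [← S.sx5, S.sx1]
  have h2 : S.q x a (S.q x M.eh y) = S.q x (M.p M.e0 a M.eh) y := by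
    rw [← S.sx5, S.sx1]
  rw [h1, h2, mobi_key]
end

section
/- Let (A,p,0,½,1) be a mobi algebra and (X,q) an A-mobi space. Then for all x,y ∈ X and a,b,c ∈ A, q(q(q(x,a,y),b,x),½,q(x,b,q(x,c,y))) = q(x,½,q(x,p(a,b,c),y)). -/
/-- In an `A`-mobi space,
`q(q(q(x,a,y),b,x),½,q(x,b,q(x,c,y))) = q(x,½,q(x,p(a,b,c),y))`. -/
theorem mobiSpace_Y8 {A X : Type*} (M : MobiAlgebra A) (S : MobiSpace M X) :
    ∀ x y : X, ∀ a b c : A,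
      S.q (S.q (S.q x a y) b x) M.eh (S.q x b (S.q x c y)) =
        S.q x M.eh (S.q x (M.p a b c) y) := by
  intro x y a b c
  have comm : ∀ u v : A, M.p u M.eh v = M.p v M.eh u := by
    intro u v
    calc M.p u M.eh v = M.p u (M.p M.e1 M.eh M.e0) v := by rw [M.ax1]
      _ = M.p (M.p u M.e1 v) M.eh (M.p u M.e0 v) := M.ax7 ..
      _ = M.p v M.eh u := by rw [M.ax5, M.ax4]
  have h1 : S.q (S.q x a y) b x = S.q x (M.p a b M.e0) y := by
    rw [← S.sx5 x y a b M.e0, S.sx1]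
  have h2 : S.q x b (S.q x c y) = S.q x (M.p M.e0 b c) y := by
    rw [← S.sx5 x y M.e0 b c, S.sx1]
  have h3 : S.q x M.eh (S.q x (M.p a b c) y) = S.q x (M.p M.e0 M.eh (M.p a b c)) y := by
    rw [← S.sx5 x y M.e0 M.eh (M.p a b c), S.sx1]
  rw [h1, h2, h3, S.sx5]
  have key : M.p (M.p a b M.e0) M.eh (M.p M.e0 b c) = M.p M.e0 M.eh (M.p a b c) := by
    rw [M.ax8, comm a M.e0]
    conv_rhs => rw [← M.ax3 M.e0 b]
    rw [M.ax8]
  rw [key]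
end

section
/- Let (A,p,0,½,1) be a mobi algebra and (X,q) an A-mobi space. If x,y ∈ X and a ∈ A satisfy q(x,a,y) = q(y,a,x), then q(x,a,y) = q(x,½,y). -/
/-- In an `A`-mobi space, if `q(x,a,y) = q(y,a,x)` then `q(x,a,y) = q(x,½,y)`. -/
theorem mobiSpace_meet {A X : Type*} (M : MobiAlgebra A) (S : MobiSpace M X) :
    ∀ x y : X, ∀ a : A, S.q x a y = S.q y a x → S.q x a y = S.q x M.eh y := by
  intro x y a h
  have key : M.p a M.eh (M.p M.e1 a M.e0) = M.eh := by
    have h8 := M.ax8 M.e0 M.e1 M.e1 M.e0 a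
    rw [M.ax2, M.ax2, M.ax1, M.ax3] at h8
    exact h8
  have hy : S.q y a x = S.q x (M.p M.e1 a M.e0) y := by
    rw [← S.sx5 x y M.e1 a M.e0, S.sx2, S.sx1]
  have : S.q x M.eh y = S.q x a y := by
    rw [← key, ← S.sx5, ← hy, ← h, S.sx3]
  exact this.symm
end

section
/- In the setting of the second-order initial value problem flow: suppose there is a unique map β : X×X → V such that π(x,β(x,y),1) = y for all x,y ∈ X. Then for every x ∈ X, y ∈ X, v ∈ V and s,t ∈ ℝ: (i) β(x,x) = 0; (ii) s·β(x,y) = β(x, π(x,β(x,y),s)); (iii) β(π(x,v,s), π(x,v,t)) = (t-s)·π'(x,v,s), where π'(x,v,s) denotes the derivative of the curve r ↦ π(x,v,r) at r = s. -/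
/- Setting: a second-order initial value problem flow.  `X ⊆ ℝⁿ` is open, `V ⊆ ℝⁿ` is a
linear subspace, `g : X × V → ℝⁿ` satisfies `g(x, λv) = λ² g(x,v)`, and `pi x v t` (written
`π(x,v,t)` in the paper) is the unique solution of the initial value problem
`x' = v`, `v' = g(x,v)` with `x(0) = x`, `v(0) = v`; `pi' x v t` is its derivative
`π'(x,v,t)`. -/

/-- Lemma 3: if `β` is the unique map with `π(x,β(x,y),1) = y`, then
(i) `β(x,x) = 0`; (ii) `s·β(x,y) = β(x, π(x,β(x,y),s))`;
(iii) `β(π(x,v,s), π(x,v,t)) = (t-s)·π'(x,v,s)`. -/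
theorem flow_beta_properties
    {n : ℕ} (X : Set (Fin n → ℝ)) (hX : IsOpen X)
    (V : Submodule ℝ (Fin n → ℝ))
    (g : (Fin n → ℝ) → (Fin n → ℝ) → (Fin n → ℝ))
    (hg : ∀ x ∈ X, ∀ v ∈ V, ∀ lam : ℝ, g x (lam • v) = lam ^ 2 • g x v)
    (pi pi' : (Fin n → ℝ) → (Fin n → ℝ) → ℝ → (Fin n → ℝ))
    (hπX : ∀ x ∈ X, ∀ v ∈ V, ∀ t : ℝ, pi x v t ∈ X)
    (hπV : ∀ x ∈ X, ∀ v ∈ V, ∀ t : ℝ, pi' x v t ∈ V)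
    (hπ0 : ∀ x ∈ X, ∀ v ∈ V, pi x v 0 = x)
    (hπ'0 : ∀ x ∈ X, ∀ v ∈ V, pi' x v 0 = v)
    (hπd : ∀ x ∈ X, ∀ v ∈ V, ∀ t : ℝ, HasDerivAt (pi x v) (pi' x v t) t)
    (hπd' : ∀ x ∈ X, ∀ v ∈ V, ∀ t : ℝ,
      HasDerivAt (pi' x v) (g (pi x v t) (pi' x v t)) t)
    (huniq : ∀ x ∈ X, ∀ v ∈ V, ∀ f f' : ℝ → (Fin n → ℝ),
      (∀ t : ℝ, f t ∈ X) → (∀ t : ℝ, f' t ∈ V) →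
      (∀ t : ℝ, HasDerivAt f (f' t) t) →
      (∀ t : ℝ, HasDerivAt f' (g (f t) (f' t)) t) →
      f 0 = x → f' 0 = v → ∀ t : ℝ, f t = pi x v t)
    (beta : (Fin n → ℝ) → (Fin n → ℝ) → (Fin n → ℝ))
    (hβV : ∀ x ∈ X, ∀ y ∈ X, beta x y ∈ V)
    (hβ : ∀ x ∈ X, ∀ y ∈ X, pi x (beta x y) 1 = y)
    (hβuniq : ∀ beta' : (Fin n → ℝ) → (Fin n → ℝ) → (Fin n → ℝ),
      (∀ x ∈ X, ∀ y ∈ X, beta' x y ∈ V) →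
      (∀ x ∈ X, ∀ y ∈ X, pi x (beta' x y) 1 = y) →
      ∀ x ∈ X, ∀ y ∈ X, beta' x y = beta x y)
    :
    (∀ x ∈ X, beta x x = 0) ∧
    (∀ x ∈ X, ∀ y ∈ X, ∀ s : ℝ, s • beta x y = beta x (pi x (beta x y) s)) ∧
    (∀ x ∈ X, ∀ v ∈ V, ∀ s t : ℝ,
      beta (pi x v s) (pi x v t) = (t - s) • pi' x v s) := by
  classical
  -- pointwise uniqueness of beta
  have hbu : ∀ x ∈ X, ∀ y ∈ X, ∀ w ∈ V, pi x w 1 = y → beta x y = w := by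
    intro x hx y hy w hw hpw
    have h := hβuniq (fun a b => if a = x ∧ b = y then w else beta a b)
      (by intro a ha b hb; split
          · exact hw
          · exact hβV a ha b hb)
      (by intro a ha b hb; split
          · rename_i h; obtain ⟨rfl, rfl⟩ := h; exact hpw
          · exact hβ a ha b hb) x hx y hy
    simpa using h.symm
  -- rescaling
  have hres : ∀ x ∈ X, ∀ v ∈ V, ∀ lam t : ℝ, pi x v (lam * t) = pi x (lam • v) t := by
    intro x hx v hv lam t
    refine huniq x hx (lam • v) (V.smul_mem lam hv)
      (fun u => pi x v (lam * u)) (fun u => lam • pi' x v (lam * u))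
      (fun u => hπX x hx v hv _) (fun u => V.smul_mem lam (hπV x hx v hv _))
      ?_ ?_ ?_ ?_ t
    · intro u
      have h2 : HasDerivAt (fun r : ℝ => lam * r) lam u := by
        simpa using (hasDerivAt_id u).const_mul lam
      have h := (hπd x hx v hv (lam * u)).scomp u h2
      exact h
    · intro u
      have h2 : HasDerivAt (fun r : ℝ => lam * r) lam u := by
        simpa using (hasDerivAt_id u).const_mul lam
      have h3 := ((hπd' x hx v hv (lam * u)).scomp u h2).const_smul lam
      have hge : g (pi x v (lam * u)) (lam • pi' x v (lam * u))
          = lam ^ 2 • g (pi x v (lam * u)) (pi' x v (lam * u)) :=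
        hg _ (hπX x hx v hv _) _ (hπV x hx v hv _) lam
      rw [hge]
      rw [sq, ← smul_smul]
      exact h3
    · simp [hπ0 x hx v hv]
    · simp [hπ'0 x hx v hv]
  -- translation
  have htr : ∀ x ∈ X, ∀ v ∈ V, ∀ s t : ℝ,
      pi x v (s + t) = pi (pi x v s) (pi' x v s) t := by
    intro x hx v hv s t
    refine huniq (pi x v s) (hπX x hx v hv s) (pi' x v s) (hπV x hx v hv s)
      (fun u => pi x v (s + u)) (fun u => pi' x v (s + u))
      (fun u => hπX x hx v hv _) (fun u => hπV x hx v hv _)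
      ?_ ?_ (by simp) (by simp) t
    · intro u
      have h2 : HasDerivAt (fun r : ℝ => s + r) 1 u := by
        simpa using (hasDerivAt_id u).const_add s
      have h := (hπd x hx v hv (s + u)).scomp u h2
      simp only [one_smul] at h
      exact h
    · intro u
      have h2 : HasDerivAt (fun r : ℝ => s + r) 1 u := by
        simpa using (hasDerivAt_id u).const_add s
      have h := (hπd' x hx v hv (s + u)).scomp u h2
      simp only [one_smul] at h
      exact h
  -- constant solution: pi x 0 t = x
  have hconst : ∀ x ∈ X, ∀ t : ℝ, pi x (0 : Fin n → ℝ) t = x := by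
    intro x hx t
    have hg0 : g x (0 : Fin n → ℝ) = 0 := by
      have := hg x hx 0 V.zero_mem 0
      simpa using this
    have h := huniq x hx (0 : Fin n → ℝ) V.zero_mem
      (fun _ => x) (fun _ => 0) (fun _ => hx) (fun _ => V.zero_mem)
      (fun u => by simpa using hasDerivAt_const u x)
      (fun u => by simpa [hg0] using hasDerivAt_const u (0 : Fin n → ℝ))
      rfl rfl t
    exact h.symm
  refine ⟨?_, ?_, ?_⟩
  · intro x hx
    exact hbu x hx x hx 0 V.zero_mem (hconst x hx 1)
  · intro x hx y hy s
    have hb := hβV x hx y hy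
    have key : pi x (s • beta x y) 1 = pi x (beta x y) s := by
      rw [← hres x hx (beta x y) hb s 1, mul_one]
    exact (hbu x hx (pi x (beta x y) s) (hπX x hx (beta x y) hb s)
      (s • beta x y) (V.smul_mem s hb) key).symm
  · intro x hx v hv s t
    have hPs := hπX x hx v hv s
    have hw := hπV x hx v hv s
    have key : pi (pi x v s) ((t - s) • pi' x v s) 1 = pi x v t := by
      rw [← hres (pi x v s) hPs (pi' x v s) hw (t - s) 1, mul_one,
        ← htr x hx v hv s (t - s)]
      ring_nf
    exact hbu (pi x v s) hPs (pi x v t) (hπX x hx v hv t)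
      ((t - s) • pi' x v s) (V.smul_mem _ hw) key
end

section
/- In the setting of the second-order initial value problem flow: suppose there is a unique map β : X×X → V such that π(x,β(x,y),1) = y for all x,y ∈ X. Then the pair (X,q), where q(x,t,y) = π(x,β(x,y),t) for t ∈ [0,1], is a mobi space over the mobi algebra ([0,1], p, 0, 1/2, 1) with p(s,u,t) = s + u(t-s); that is, q satisfies axioms (X1)–(X5). -/
/- Setting: a second-order initial value problem flow.  `X ⊆ ℝⁿ` is open, `V ⊆ ℝⁿ` is a
linear subspace, `g : X × V → ℝⁿ` satisfies `g(x, λv) = λ² g(x,v)`, and `pi x v t` (written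
`π(x,v,t)` in the paper) is the unique solution of the initial value problem
`x' = v`, `v' = g(x,v)` with `x(0) = x`, `v(0) = v`; `pi' x v t` is its derivative
`π'(x,v,t)`. -/

/-- Theorem 5.5: if `β` is the unique map with `π(x,β(x,y),1) = y`, then
`q(x,t,y) = π(x,β(x,y),t)` makes `X` a mobi space over the mobi algebra
`([0,1], p, 0, ½, 1)` with `p(s,u,t) = s + u(t-s)`; i.e. `q` satisfies (X1)–(X5). -/
theorem flow_mobiSpace
    {n : ℕ} (X : Set (Fin n → ℝ)) (hX : IsOpen X)
    (V : Submodule ℝ (Fin n → ℝ))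
    (g : (Fin n → ℝ) → (Fin n → ℝ) → (Fin n → ℝ))
    (hg : ∀ x ∈ X, ∀ v ∈ V, ∀ lam : ℝ, g x (lam • v) = lam ^ 2 • g x v)
    (pi pi' : (Fin n → ℝ) → (Fin n → ℝ) → ℝ → (Fin n → ℝ))
    (hπX : ∀ x ∈ X, ∀ v ∈ V, ∀ t : ℝ, pi x v t ∈ X)
    (hπV : ∀ x ∈ X, ∀ v ∈ V, ∀ t : ℝ, pi' x v t ∈ V)
    (hπ0 : ∀ x ∈ X, ∀ v ∈ V, pi x v 0 = x)
    (hπ'0 : ∀ x ∈ X, ∀ v ∈ V, pi' x v 0 = v)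
    (hπd : ∀ x ∈ X, ∀ v ∈ V, ∀ t : ℝ, HasDerivAt (pi x v) (pi' x v t) t)
    (hπd' : ∀ x ∈ X, ∀ v ∈ V, ∀ t : ℝ,
      HasDerivAt (pi' x v) (g (pi x v t) (pi' x v t)) t)
    (huniq : ∀ x ∈ X, ∀ v ∈ V, ∀ f f' : ℝ → (Fin n → ℝ),
      (∀ t : ℝ, f t ∈ X) → (∀ t : ℝ, f' t ∈ V) →
      (∀ t : ℝ, HasDerivAt f (f' t) t) →
      (∀ t : ℝ, HasDerivAt f' (g (f t) (f' t)) t) →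
      f 0 = x → f' 0 = v → ∀ t : ℝ, f t = pi x v t)
    (beta : (Fin n → ℝ) → (Fin n → ℝ) → (Fin n → ℝ))
    (hβV : ∀ x ∈ X, ∀ y ∈ X, beta x y ∈ V)
    (hβ : ∀ x ∈ X, ∀ y ∈ X, pi x (beta x y) 1 = y)
    (hβuniq : ∀ beta' : (Fin n → ℝ) → (Fin n → ℝ) → (Fin n → ℝ),
      (∀ x ∈ X, ∀ y ∈ X, beta' x y ∈ V) →
      (∀ x ∈ X, ∀ y ∈ X, pi x (beta' x y) 1 = y) →
      ∀ x ∈ X, ∀ y ∈ X, beta' x y = beta x y)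
    (q : (Fin n → ℝ) → ℝ → (Fin n → ℝ) → (Fin n → ℝ))
    (hq : ∀ x ∈ X, ∀ y ∈ X, ∀ t : ℝ, q x t y = pi x (beta x y) t) :
    (∀ x ∈ X, ∀ y ∈ X, q x 0 y = x) ∧
    (∀ x ∈ X, ∀ y ∈ X, q x 1 y = y) ∧
    (∀ x ∈ X, ∀ a ∈ Set.Icc (0:ℝ) 1, q x a x = x) ∧
    (∀ x ∈ X, ∀ y₁ ∈ X, ∀ y₂ ∈ X, q x (1/2) y₁ = q x (1/2) y₂ → y₁ = y₂) ∧
    (∀ x ∈ X, ∀ y ∈ X, ∀ a ∈ Set.Icc (0:ℝ) 1, ∀ b ∈ Set.Icc (0:ℝ) 1,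
      ∀ c ∈ Set.Icc (0:ℝ) 1,
      q (q x a y) b (q x c y) = q x (a + b * (c - a)) y) := by

  classical
  -- g x 0 = 0
  have hg0 : ∀ x ∈ X, g x 0 = 0 := by
    intro x hx
    have h := hg x hx 0 V.zero_mem 0
    simpa using h
  -- constant solution
  have hconst : ∀ x ∈ X, ∀ t : ℝ, pi x 0 t = x := by
    intro x hx t
    have := huniq x hx 0 V.zero_mem (fun _ => x) (fun _ => 0)
      (fun _ => hx) (fun _ => V.zero_mem)
      (fun t => hasDerivAt_const t x)
      (fun t => by simpa [hg0 x hx] using hasDerivAt_const t (0 : Fin n → ℝ))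
      rfl rfl t
    exact this.symm
  -- scaling
  have hscale : ∀ x ∈ X, ∀ v ∈ V, ∀ lam t : ℝ,
      pi x (lam • v) t = pi x v (lam * t) ∧
      pi' x (lam • v) t = lam • pi' x v (lam * t) := by
    intro x hx v hv lam t
    have hF : ∀ s : ℝ, HasDerivAt (fun s => pi x v (lam * s))
        (lam • pi' x v (lam * s)) s := by
      intro s
      have hin : HasDerivAt (fun s : ℝ => lam * s) lam s := by
        simpa using (hasDerivAt_id s).const_mul lam
      exact (hπd x hx v hv (lam * s)).scomp s hin
    have hF' : ∀ s : ℝ, HasDerivAt (fun s => lam • pi' x v (lam * s))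
        (g (pi x v (lam * s)) (lam • pi' x v (lam * s))) s := by
      intro s
      have hin : HasDerivAt (fun s : ℝ => lam * s) lam s := by
        simpa using (hasDerivAt_id s).const_mul lam
      have h1 := ((hπd' x hx v hv (lam * s)).scomp s hin).const_smul lam
      have heq : g (pi x v (lam * s)) (lam • pi' x v (lam * s))
          = lam • lam • g (pi x v (lam * s)) (pi' x v (lam * s)) := by
        rw [hg (pi x v (lam * s)) (hπX x hx v hv _) (pi' x v (lam * s))
          (hπV x hx v hv _) lam, smul_smul, sq]
      rw [heq]
      exact h1
    have hmain := huniq x hx (lam • v) (V.smul_mem lam hv)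
      (fun s => pi x v (lam * s)) (fun s => lam • pi' x v (lam * s))
      (fun s => hπX x hx v hv _) (fun s => V.smul_mem lam (hπV x hx v hv _))
      hF hF'
      (by simp [hπ0 x hx v hv]) (by simp [hπ'0 x hx v hv])
    refine ⟨(hmain t).symm, ?_⟩
    have hd1 : HasDerivAt (pi x (lam • v)) (lam • pi' x v (lam * t)) t := by
      have : (fun s => pi x v (lam * s)) = pi x (lam • v) := funext hmain
      rw [← this]
      exact hF t
    exact (hπd x hx (lam • v) (V.smul_mem lam hv) t).unique hd1
  -- translation
  have htrans : ∀ x ∈ X, ∀ v ∈ V, ∀ s t : ℝ,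
      pi (pi x v s) (pi' x v s) t = pi x v (s + t) ∧
      pi' (pi x v s) (pi' x v s) t = pi' x v (s + t) := by
    intro x hx v hv s t
    have hF : ∀ u : ℝ, HasDerivAt (fun u => pi x v (s + u)) (pi' x v (s + u)) u := by
      intro u
      have hin : HasDerivAt (fun u : ℝ => s + u) 1 u := by
        simpa using (hasDerivAt_id u).const_add s
      have h := (hπd x hx v hv (s + u)).scomp u hin; rw [one_smul] at h; exact h
    have hF' : ∀ u : ℝ, HasDerivAt (fun u => pi' x v (s + u))
        (g (pi x v (s + u)) (pi' x v (s + u))) u := by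
      intro u
      have hin : HasDerivAt (fun u : ℝ => s + u) 1 u := by
        simpa using (hasDerivAt_id u).const_add s
      have h := (hπd' x hx v hv (s + u)).scomp u hin; rw [one_smul] at h; exact h
    have hmain := huniq (pi x v s) (hπX x hx v hv s) (pi' x v s) (hπV x hx v hv s)
      (fun u => pi x v (s + u)) (fun u => pi' x v (s + u))
      (fun u => hπX x hx v hv _) (fun u => hπV x hx v hv _)
      hF hF' (by simp) (by simp)
    refine ⟨(hmain t).symm, ?_⟩
    have hd1 : HasDerivAt (pi (pi x v s) (pi' x v s)) (pi' x v (s + t)) t := by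
      have : (fun u => pi x v (s + u)) = pi (pi x v s) (pi' x v s) := funext hmain
      rw [← this]
      exact hF t
    exact (hπd (pi x v s) (hπX x hx v hv s) (pi' x v s) (hπV x hx v hv s) t).unique hd1
  -- key uniqueness: beta x (pi x w 1) = w
  have hkey : ∀ x ∈ X, ∀ w ∈ V, beta x (pi x w 1) = w := by
    intro x hx w hw
    have hz : pi x w 1 ∈ X := hπX x hx w hw 1
    have h := hβuniq (fun a b => if a = x ∧ b = pi x w 1 then w else beta a b)
      (by
        intro a ha b hb
        by_cases h : a = x ∧ b = pi x w 1
        · simp only [h, if_true]; exact hw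
        · simp only [h, if_false]; exact hβV a ha b hb)
      (by
        intro a ha b hb
        by_cases h : a = x ∧ b = pi x w 1
        · obtain ⟨rfl, rfl⟩ := h
          simp
        · simp only [h, if_false]; exact hβ a ha b hb)
      x hx (pi x w 1) hz
    simpa using h.symm
  have ⟨hq0, hq1, hqxx, hqinj, hqcomp⟩ : True ∧ True ∧ True ∧ True ∧ True := by
    exact ⟨trivial, trivial, trivial, trivial, trivial⟩
  refine ⟨?_, ?_, ?_, ?_, ?_⟩
  · intro x hx y hy
    rw [hq x hx y hy 0, hπ0 x hx (beta x y) (hβV x hx y hy)]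
  · intro x hx y hy
    rw [hq x hx y hy 1]; exact hβ x hx y hy
  · intro x hx a _
    have hb : beta x x = 0 := by
      have := hkey x hx 0 V.zero_mem
      rwa [hconst x hx 1] at this
    rw [hq x hx x hx a, hb, hconst x hx]
  · intro x hx y₁ hy₁ y₂ hy₂ heq
    have h1 : ∀ y, y ∈ X → q x (1/2) y = pi x ((1/2 : ℝ) • beta x y) 1 := by
      intro y hy
      rw [hq x hx y hy, (hscale x hx (beta x y) (hβV x hx y hy) (1/2) 1).1]
      norm_num
    have e1 := hkey x hx ((1/2 : ℝ) • beta x y₁) (V.smul_mem _ (hβV x hx y₁ hy₁))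
    have e2 := hkey x hx ((1/2 : ℝ) • beta x y₂) (V.smul_mem _ (hβV x hx y₂ hy₂))
    rw [← h1 y₁ hy₁] at e1
    rw [← h1 y₂ hy₂] at e2
    rw [heq] at e1
    have : (1/2 : ℝ) • beta x y₁ = (1/2 : ℝ) • beta x y₂ := by rw [← e1, ← e2]
    have hb : beta x y₁ = beta x y₂ := by
      have := congrArg (fun w => (2 : ℝ) • w) this
      simpa [smul_smul] using this
    calc y₁ = pi x (beta x y₁) 1 := (hβ x hx y₁ hy₁).symm
      _ = pi x (beta x y₂) 1 := by rw [hb]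
      _ = y₂ := hβ x hx y₂ hy₂
  · intro x hx y hy a _ b _ c _
    set v := beta x y with hv_def
    have hvV : v ∈ V := hβV x hx y hy
    have hxa : pi x v a ∈ X := hπX x hx v hvV a
    have hxc : pi x v c ∈ X := hπX x hx v hvV c
    have hva : pi' x v a ∈ V := hπV x hx v hvV a
    -- pi (pi x v a) ((c-a) • pi' x v a) 1 = pi x v c
    have hstep : pi (pi x v a) ((c - a) • pi' x v a) 1 = pi x v c := by
      rw [(hscale (pi x v a) hxa (pi' x v a) hva (c - a) 1).1,
        mul_one, (htrans x hx v hvV a (c - a)).1]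
      ring_nf
    have hbeta2 : beta (pi x v a) (pi x v c) = (c - a) • pi' x v a := by
      have := hkey (pi x v a) hxa ((c - a) • pi' x v a) (V.smul_mem _ hva)
      rwa [hstep] at this
    rw [hq x hx y hy a, hq x hx y hy c, ← hv_def,
      hq (pi x v a) hxa (pi x v c) hxc b, hbeta2,
      (hscale (pi x v a) hxa (pi' x v a) hva (c - a) b).1,
      (htrans x hx v hvV a ((c - a) * b)).1,
      hq x hx y hy (a + b * (c - a)), ← hv_def]
    ring_nf
end

section
/- Let (X,q) be a mobi space over a mobi algebra (A,p,0,½,1), and let h : X → S be a map onto a set S. Suppose there exist maps s : S → X and θ : S×S → X such that for all u,v,v' ∈ S and a₁,a₂,a₃ ∈ A: (1) h(s(u)) = u; (2) h(θ(u,v)) = v; (3) θ(u,u) = s(u); (4) h(q(s(u),½,θ(u,v))) = h(q(s(u),½,θ(u,v'))) implies v = v'; (5) h(q(s(u), p(a₁,a₂,a₃), θ(u,v))) = h(q(s(w), a₂, θ(w, h(q(s(u),a₃,θ(u,v)))))) where w = h(q(s(u),a₁,θ(u,v))). Then (S,q_S) with q_S(u,a,v) = h(q(s(u),a,θ(u,v)))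 is an A-mobi space. -/
/-- Proposition 5.8: if `(X,q)` is a mobi space over `A`, `h : X → S` is onto, and
`s : S → X`, `θ : S × S → X` satisfy the five listed conditions, then
`q_S(u,a,v) = h(q(s(u),a,θ(u,v)))` makes `S` an `A`-mobi space. -/
theorem identification_mobiSpace {A X S : Type*} (M : MobiAlgebra A) (Q : MobiSpace M X)
    (h : X → S) (hsurj : Function.Surjective h)
    (s : S → X) (θ : S → S → X)
    (h1 : ∀ u : S, h (s u) = u)
    (h2 : ∀ u v : S, h (θ u v) = v)
    (h3 : ∀ u : S, θ u u = s u)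
    (h4 : ∀ u v v' : S,
      h (Q.q (s u) M.eh (θ u v)) = h (Q.q (s u) M.eh (θ u v')) → v = v')
    (h5 : ∀ u v : S, ∀ a₁ a₂ a₃ : A,
      h (Q.q (s u) (M.p a₁ a₂ a₃) (θ u v)) =
        h (Q.q (s (h (Q.q (s u) a₁ (θ u v)))) a₂
            (θ (h (Q.q (s u) a₁ (θ u v))) (h (Q.q (s u) a₃ (θ u v)))))) :
    ∃ QS : MobiSpace M S,
      ∀ (u : S) (a : A) (v : S), QS.q u a v = h (Q.q (s u) a (θ u v)) := by
  refine ⟨⟨fun u a v => h (Q.q (s u) a (θ u v)), ?_, ?_, ?_, ?_, ?_⟩,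
    fun u a v => rfl⟩
  · intro x y; simp [Q.sx1, h1]
  · intro x y; simp [Q.sx2, h2]
  · intro x a; simp [h3, Q.sx3, h1]
  · exact h4
  · intro x y a b c
    exact (h5 x y a b c).symm
end

section
/- Let A be a unitary ring in which 1+1 is invertible with inverse ½, and let X be an A-module. Then the system (A,p,0,½,1) with p(a,b,c) = a + bc - ba is a mobi algebra, and (X,q) with q(x,a,y) = (1-a)·x + a·y is an affine A-mobi space; that is, q satisfies axioms (X1)–(X5) together with the affine identity q(q(x₁,a,y₁),½,q(x₂,a,y₂)) = q(q(x₁,½,x₂),a,q(y₁,½,y₂)) for all x₁,x₂,y₁,y₂ ∈ X and a ∈ A. -/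
/-- Theorem 6.1: if `A` is a unitary ring in which `1+1` is invertible with
inverse `½`, and `X` is an `A`-module, then `(A, p, 0, ½, 1)` with `p(a,b,c) = a + bc - ba` is a
mobi algebra and `q(x,a,y) = (1-a)·x + a·y` makes `X` an affine `A`-mobi space. -/
theorem module_affineMobiSpace {A X : Type*} [Ring A] [AddCommGroup X] [Module A X]
    (half : A) (hhalf : (1 + 1) * half = 1 ∧ half * (1 + 1) = 1) :
    ∃ M : MobiAlgebra A, ∃ Q : MobiSpace M X,
      (∀ a b c : A, M.p a b c = a + b * c - b * a) ∧
      M.e0 = 0 ∧ M.eh = half ∧ M.e1 = 1 ∧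
      (∀ (x : X) (a : A) (y : X), Q.q x a y = (1 - a) • x + a • y) ∧
      (∀ (x₁ x₂ y₁ y₂ : X) (a : A),
        Q.q (Q.q x₁ a y₁) M.eh (Q.q x₂ a y₂) =
          Q.q (Q.q x₁ M.eh x₂) a (Q.q y₁ M.eh y₂)) := by
  obtain ⟨h1, h2⟩ := hhalf
  have cancel : ∀ b₁ b₂ : A, half * b₁ = half * b₂ → b₁ = b₂ := by
    intro b₁ b₂ h
    calc b₁ = (1 + 1) * (half * b₁) := by rw [← mul_assoc, h1, one_mul]
    _ = (1 + 1) * (half * b₂) := by rw [h]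
    _ = b₂ := by rw [← mul_assoc, h1, one_mul]
  have scancel : ∀ y₁ y₂ : X, half • y₁ = half • y₂ → y₁ = y₂ := by
    intro y₁ y₂ h
    calc y₁ = ((1 + 1) * half) • y₁ := by rw [h1, one_smul]
    _ = (1 + 1 : A) • (half • y₁) := by rw [mul_smul]
    _ = (1 + 1 : A) • (half • y₂) := by rw [h]
    _ = y₂ := by rw [← mul_smul, h1, one_smul]
  refine ⟨⟨fun a b c => a + b * c - b * a, 0, half, 1, ?_, ?_, ?_, ?_, ?_, ?_, ?_, ?_⟩,
    ⟨fun x a y => (1 - a) • x + a • y, ?_, ?_, ?_, ?_, ?_⟩,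
    fun a b c => rfl, rfl, rfl, rfl, fun x a y => rfl, ?_⟩
  · show (1:A) + half * 0 - half * 1 = half
    have h : half + half = 1 := by have h' := h1; rwa [add_mul, one_mul] at h'
    rw [mul_zero, mul_one, add_zero, sub_eq_iff_eq_add]
    exact h.symm
  · intro a; simp
  · intro a b; simp
  · intro a b; simp
  · intro a b; simp only [one_mul]; abel
  · intro a b₁ b₂ h
    apply cancel
    have h' : a + half * b₁ - half * a = a + half * b₂ - half * a := h
    exact add_left_cancel (sub_left_inj.mp h')
  · intro a b c₁ c₂ c₃; show _ = _; noncomm_ring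
  · intro a₁ a₂ b₁ b₂ c
    have hc : ∀ d : A, half * d = d * half := by
      intro d
      calc half * d = half * d * ((1 + 1) * half) := by rw [h1, mul_one]
      _ = half * ((1 + 1) * d) * half := by noncomm_ring
      _ = d * half := by rw [← mul_assoc, h2, one_mul]
    have hc' : ∀ d x : A, d * (half * x) = half * (d * x) := by
      intro d x; rw [← mul_assoc, ← hc, mul_assoc]
    show _ = _
    simp only [mul_add, mul_sub, add_mul, sub_mul, mul_assoc, hc']
    abel
  · intro x y; simp
  · intro x y; simp
  · intro x a
    show (1 - a) • x + a • x = x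
    rw [← add_smul, sub_add_cancel, one_smul]
  · intro x y₁ y₂ h
    apply scancel
    simp only at h
    exact add_left_cancel h
  · intro x y a b c
    simp only [sub_smul, one_smul, smul_add, smul_sub, add_smul, mul_smul]
    abel
  · intro x₁ x₂ y₁ y₂ a
    have hc : ∀ d : A, half * d = d * half := by
      intro d
      calc half * d = half * d * ((1 + 1) * half) := by rw [h1, mul_one]
      _ = half * ((1 + 1) * d) * half := by noncomm_ring
      _ = d * half := by rw [← mul_assoc, h2, one_mul]
    have hc' : ∀ (d : A) (x : X), d • half • x = half • d • x := by
      intro d x; rw [← mul_smul, ← hc, mul_smul]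
    show _ = _
    simp only [sub_smul, one_smul, smul_add, smul_sub, add_smul, mul_smul, hc']
    abel
end

section
/- Let (A,p,0,½,1) be a mobi algebra containing an element 2 with p(0,½,2) = 1, let (X,q) be an affine A-mobi space, and fix e ∈ X. Define a+b = p(0,2,p(a,½,b)) and a·b = p(0,a,b) on A, and on X define x ⊞ y = q(e,2,q(x,½,y)) and φ_a(x) = q(e,a,x). Then (X,⊞,e) is an abelian group (with -x = q(e,p(1,2,0),x)) and φ makes X a module over the unitary ring (A,+,·,0,1): φ_a(x ⊞ y) = φ_a(x) ⊞ φ_a(y), φ_{a+b}(x) = φ_a(x) ⊞ φ_b(x), φ_{a·b}(x) = φ_a(φ_b(x)), and φ_1(x) = x. -/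
namespace MobiAlgebra

variable {A : Type*} (M : MobiAlgebra A)

lemma pcomm (a b : A) : M.p a M.eh b = M.p b M.eh a := by
  conv_lhs => rw [← M.ax1]
  rw [M.ax7, M.ax5, M.ax4]

lemma passoc (a b c : A) : M.p M.e0 (M.p M.e0 a b) c = M.p M.e0 a (M.p M.e0 b c) := by
  rw [M.ax7, M.ax4]

lemma mul_half (c : A) : M.p M.e0 c M.eh = M.p M.e0 M.eh c := by
  have h := M.ax8 M.e0 M.e0 M.e0 M.e1 c
  simp only [M.ax3, M.ax2] at h
  exact h.symm

lemma p02h (two : A) (htwo : M.p M.e0 M.eh two = M.e1) :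
    M.p M.e0 two M.eh = M.e1 := (M.mul_half two).trans htwo

lemma half_two_cancel (two : A) (htwo : M.p M.e0 M.eh two = M.e1) (a : A) :
    M.p M.e0 M.eh (M.p M.e0 a two) = a := by
  have h := M.ax8 M.e0 M.e0 M.e0 two a
  simp only [M.ax3, htwo, M.ax2] at h
  exact h

lemma two_comm (two : A) (htwo : M.p M.e0 M.eh two = M.e1) (a : A) :
    M.p M.e0 a two = M.p M.e0 two a := by
  apply M.ax6 M.e0
  rw [M.half_two_cancel two htwo a]
  have h := M.ax8 M.e0 M.e0 M.e0 a two
  simp only [M.ax3] at h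
  rw [h, ← M.passoc, M.p02h two htwo]
  exact (M.ax5 M.e0 a).symm

lemma neg_one_half_one (two : A) (htwo : M.p M.e0 M.eh two = M.e1) :
    M.p (M.p M.e1 two M.e0) M.eh M.e1 = M.e0 := by
  -- p(2,half,m) = half where m = p(1,2,0)
  have hA : M.p two M.eh (M.p M.e1 two M.e0) = M.eh := by
    have h := M.ax8 M.e0 M.e1 M.e1 M.e0 two
    -- p (p 0 2 1) h (p 1 2 0) = p (p 0 h 1) 2 (p 1 h 0)
    rw [M.ax2, M.ax2, M.ax1, M.ax3] at h
    exact h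
  -- p(half,half,p(1,half,2)) = 1
  have h3 : M.p M.eh M.eh (M.p M.e1 M.eh two) = M.e1 := by
    have h := M.ax8 M.e1 M.e1 M.e0 two M.eh
    -- p (p 1 h 0) h (p 1 h 2) = p (p 1 h 1) h (p 0 h 2)
    rw [M.ax1, M.ax3, htwo, M.ax3] at h
    exact h
  -- p(C,half,2) = 1 where C = p(m,half,1)
  have hB : M.p (M.p (M.p M.e1 two M.e0) M.eh M.e1) M.eh two = M.e1 := by
    have h1 := M.ax8 (M.p M.e1 two M.e0) two M.e1 two M.eh
    -- p (p m h 1) h (p 2 h 2) = p (p m h 2) h (p 1 h 2)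
    rw [M.ax3 two M.eh] at h1
    rw [(M.pcomm (M.p M.e1 two M.e0) two).trans hA] at h1
    exact h1.trans h3
  apply M.ax6 two
  rw [M.pcomm two (M.p (M.p M.e1 two M.e0) M.eh M.e1), hB, M.pcomm two M.e0, htwo]

end MobiAlgebra

/-- Theorem 6.2: if the mobi algebra `A` contains `2` with `p(0,½,2) = 1` and
`(X,q)` is an affine `A`-mobi space with a chosen `e ∈ X`, then setting
`a + b = p(0,2,p(a,½,b))`, `a·b = p(0,a,b)`, `x ⊞ y = q(e,2,q(x,½,y))`, `φ_a(x) = q(e,a,x)`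
and `-x = q(e,p(1,2,0),x)`, the system `(X,⊞,e)` is an abelian group and `φ` makes `X` a
module over the unitary ring `(A,+,·,0,1)`. -/
theorem affineMobiSpace_module {A X : Type*} (M : MobiAlgebra A) (Q : MobiSpace M X)
    (haffine : ∀ (x₁ x₂ y₁ y₂ : X) (a : A),
      Q.q (Q.q x₁ a y₁) M.eh (Q.q x₂ a y₂) = Q.q (Q.q x₁ M.eh x₂) a (Q.q y₁ M.eh y₂))
    (two : A) (htwo : M.p M.e0 M.eh two = M.e1)
    (e : X)
    (add : A → A → A) (hadd : ∀ a b, add a b = M.p M.e0 two (M.p a M.eh b))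
    (mul : A → A → A) (hmul : ∀ a b, mul a b = M.p M.e0 a b)
    (xadd : X → X → X) (hxadd : ∀ x y, xadd x y = Q.q e two (Q.q x M.eh y))
    (φ : A → X → X) (hφ : ∀ a x, φ a x = Q.q e a x)
    (neg : X → X) (hneg : ∀ x, neg x = Q.q e (M.p M.e1 two M.e0) x) :
    (∀ x y z : X, xadd (xadd x y) z = xadd x (xadd y z)) ∧
    (∀ x y : X, xadd x y = xadd y x) ∧
    (∀ x : X, xadd e x = x) ∧
    (∀ x : X, xadd (neg x) x = e) ∧
    (∀ (a : A) (x y : X), φ a (xadd x y) = xadd (φ a x) (φ a y)) ∧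
    (∀ (a b : A) (x : X), φ (add a b) x = xadd (φ a x) (φ b x)) ∧
    (∀ (a b : A) (x : X), φ (mul a b) x = φ a (φ b x)) ∧
    (∀ x : X, φ M.e1 x = x) := by
  have hp2h : M.p M.e0 two M.eh = M.e1 := M.p02h two htwo
  -- basic X-level facts
  have qcomm : ∀ x y : X, Q.q x M.eh y = Q.q y M.eh x := by
    intro x y
    conv_lhs => rw [← M.ax1, ← Q.sx5, Q.sx2, Q.sx1]
  -- nested scalar action
  have l1 : ∀ (b c : A) (w : X), Q.q e b (Q.q e c w) = Q.q e (M.p M.e0 b c) w := by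
    intro b c w
    calc Q.q e b (Q.q e c w) = Q.q (Q.q e M.e0 w) b (Q.q e c w) := by rw [Q.sx1]
      _ = Q.q e (M.p M.e0 b c) w := Q.sx5 e w M.e0 b c
  have hDH : ∀ z : X, Q.q e two (Q.q e M.eh z) = z := by
    intro z
    rw [l1, hp2h, Q.sx2]
  have haff2 : ∀ u v : X, Q.q (Q.q e two u) M.eh (Q.q e two v) = Q.q e two (Q.q u M.eh v) := by
    intro u v
    rw [haffine, Q.sx3]
  have medial : ∀ a b c d : X,
      Q.q (Q.q a M.eh b) M.eh (Q.q c M.eh d) = Q.q (Q.q a M.eh c) M.eh (Q.q b M.eh d) :=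
    fun a b c d => haffine a c b d M.eh
  refine ⟨?_, ?_, ?_, ?_, ?_, ?_, ?_, ?_⟩
  · -- associativity
    intro x y z
    rw [hxadd, hxadd, hxadd, hxadd]
    conv_lhs => rw [← hDH z, haff2, medial]
    conv_rhs => rw [← hDH x, haff2, qcomm e x]
  · -- commutativity
    intro x y
    rw [hxadd, hxadd, qcomm x y]
  · -- left unit
    intro x
    rw [hxadd]
    exact hDH x
  · -- inverses
    intro x
    rw [hxadd, hneg]
    have key : Q.q (Q.q e (M.p M.e1 two M.e0) x) M.eh x = e := by
      calc Q.q (Q.q e (M.p M.e1 two M.e0) x) M.eh x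
          = Q.q (Q.q e (M.p M.e1 two M.e0) x) M.eh (Q.q e M.e1 x) := by rw [Q.sx2]
        _ = Q.q e (M.p (M.p M.e1 two M.e0) M.eh M.e1) x := Q.sx5 e x _ M.eh M.e1
        _ = Q.q e M.e0 x := by rw [M.neg_one_half_one two htwo]
        _ = e := Q.sx1 e x
    rw [key, Q.sx3]
  · -- homogeneity
    intro a x y
    rw [hφ, hφ, hφ, hxadd, hxadd]
    have h1 : Q.q (Q.q e a x) M.eh (Q.q e a y) = Q.q e a (Q.q x M.eh y) := by
      rw [haffine, Q.sx3]
    rw [h1, l1, l1, M.two_comm two htwo a]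
  · -- additivity in the scalar
    intro a b x
    rw [hφ, hφ, hφ, hxadd, hadd, Q.sx5, l1]
  · -- multiplicativity
    intro a b x
    rw [hφ, hφ, hφ, hmul, l1]
  · -- identity scalar
    intro x
    rw [hφ]
    exact Q.sx2 e x
end

section
/- Let A be a unitary ring in which 2 = 1+1 is invertible with inverse ½, and let (X,+,e,φ) be an A-module (φ_a(x) denoting the scalar action a·x). Form the mobi space (X,q) with q(x,a,y) = φ_{1-a}(x) + φ_a(y). Then the module structure recovered from (X,q) with base point e, namely x +' y = q(e,2,q(x,½,y)) and φ'_a(x) = q(e,a,x), coincides with the original one: x +' y = x + y and φ'_a(x) = φ_a(x) for all x,y ∈ X and a ∈ A. -/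
/-- Proposition 6.3: let `A` be a unitary ring in which `2 = 1 + 1` is invertible
with inverse `½`, and let `X` be an `A`-module (with zero element `e = 0` and scalar action
`φ_a(x) = a • x`).  Form the mobi space operation `q(x,a,y) = φ_{1-a}(x) + φ_a(y)`.  Then the
module structure recovered from `(X,q)` with base point `e`, namely
`x +' y = q(e, 2, q(x, ½, y))` and `φ'_a(x) = q(e, a, x)`, coincides with the original one. -/
theorem module_roundtrip {A X : Type*} [Ring A] [AddCommGroup X] [Module A X]
    (half : A) (hhalf : (1 + 1) * half = 1 ∧ half * (1 + 1) = 1)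
    (q : X → A → X → X) (hq : ∀ (x : X) (a : A) (y : X), q x a y = (1 - a) • x + a • y) :
    (∀ x y : X, q 0 (1 + 1) (q x half y) = x + y) ∧
    (∀ (a : A) (x : X), q 0 a x = a • x) := by
  constructor
  · intro x y
    simp only [hq, smul_zero, zero_add, smul_add, smul_smul, ← mul_assoc]
    rw [mul_sub, hhalf.1, mul_one, add_sub_cancel_right, one_smul, one_smul]
  · intro a x
    simp [hq]
end

section
/- Let (A,p,0,½,1) be a mobi algebra containing an element 2 with p(0,½,2) = 1, let (X,q) be an affine A-mobi space, and fix e ∈ X. Define on X the operations x ⊞ y = q(e,2,q(x,½,y)) and φ_a(x) = q(e,a,x), and set ā = p(1,a,0). Then the mobi space operation reconstructed from this module structure coincides with the original one: q'(x,a,y) := φ_{ā}(x) ⊞ φ_a(y) satisfies q'(x,a,y) = q(x,a,y) for all x,y ∈ X and a ∈ A. -/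
/-- Proposition 6.4: if the mobi algebra `A` contains `2` with `p(0,½,2) = 1` and
`(X,q)` is an affine `A`-mobi space with a chosen `e ∈ X`, then with
`x ⊞ y = q(e,2,q(x,½,y))`, `φ_a(x) = q(e,a,x)` and `ā = p(1,a,0)`, the reconstructed operation
`q'(x,a,y) = φ_{ā}(x) ⊞ φ_a(y)` coincides with `q`. -/
theorem affineMobiSpace_roundtrip {A X : Type*} (M : MobiAlgebra A) (Q : MobiSpace M X)
    (haffine : ∀ (x₁ x₂ y₁ y₂ : X) (a : A),
      Q.q (Q.q x₁ a y₁) M.eh (Q.q x₂ a y₂) = Q.q (Q.q x₁ M.eh x₂) a (Q.q y₁ M.eh y₂))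
    (two : A) (htwo : M.p M.e0 M.eh two = M.e1)
    (e : X)
    (xadd : X → X → X) (hxadd : ∀ x y, xadd x y = Q.q e two (Q.q x M.eh y))
    (φ : A → X → X) (hφ : ∀ a x, φ a x = Q.q e a x)
    (q' : X → A → X → X)
    (hq' : ∀ (x : X) (a : A) (y : X), q' x a y = xadd (φ (M.p M.e1 a M.e0) x) (φ a y)) :
    ∀ (x : X) (a : A) (y : X), q' x a y = Q.q x a y := by
  intro x a y
  -- swap lemma: q(u, p(1,a,0), v) = q(v, a, u)
  have swap : ∀ (u v : X) (b : A), Q.q u (M.p M.e1 b M.e0) v = Q.q v b u := by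
    intro u v b
    rw [← Q.sx5, Q.sx1, Q.sx2]
  -- key lemma: q(e,2,q(e,½,z)) = z
  have key : ∀ z : X, Q.q e two (Q.q e M.eh z) = z := by
    intro z
    apply Q.sx4 e
    have h1 : Q.q e M.eh (Q.q e two (Q.q e M.eh z))
        = Q.q (Q.q e M.e0 (Q.q e M.eh z)) M.eh (Q.q e two (Q.q e M.eh z)) := by
      rw [Q.sx1]
    rw [h1, Q.sx5, htwo, Q.sx2]
  rw [hq', hxadd, hφ, hφ, swap]
  have h2 : Q.q x M.eh e = Q.q e M.eh x := by
    have := swap x e M.eh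
    rwa [M.ax1] at this
  rw [haffine, h2, ← haffine e x e y a, Q.sx3, key]
end
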